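/- For n ≥ 1, the bivariate generating functions satisfy: the sum over all permutations π of [n] of x^{exc(π)}·q^{cyc(π)+1} equals the sum over all σ ∈ CS_{n+1} of x^{exc(σ)}·q^{cyc(σ)}. -/

import Mathlib

open scoped Classical

/-- The word `π(1)π(2)⋯π(n)` of a permutation of `[n]`, with values in `{1,…,n}`. -/
def permWord {n : ℕ} (π : Equiv.Perm (Fin n)) : List ℕ :=
  List.ofFn fun i => (π i : ℕ) + 1

/-- The restriction of a word to `[k]`: the subword of entries `≤ k`. -/
def restrict (w : List ℕ) (k : ℕ) : List ℕ := w.filter (fun x => x ≤ k)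

/-- A succession of a word: an index `i` with `w(i+1) = w(i) + 1`. -/
def hasSuccession (w : List ℕ) : Prop :=
  ∃ i, i + 1 < w.length ∧ w.getD (i + 1) 0 = w.getD i 0 + 1

/-- The number of excedances of `π`: indices `i` with `π(i) > i`. -/
def excPerm {n : ℕ} (π : Equiv.Perm (Fin n)) : ℕ :=
  (Finset.univ.filter fun i : Fin n => i < π i).card

/-- The number of cycles of `π`, counting fixed points as cycles. -/
def cycPerm {n : ℕ} (π : Equiv.Perm (Fin n)) : ℕ :=
  Multiset.card π.cycleType + (Finset.univ.filter fun i : Fin n => π i = i).card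

/-- The word of the cycle of `π` containing `s`, starting at `s` (1-based values). -/
noncomputable def cycleWord {n : ℕ} (π : Equiv.Perm (Fin n)) (s : Fin n) : List ℕ :=
  (List.range (orderOf (π.cycleOf s))).map fun i => (((π ^ i) s : ℕ) + 1)

/-- `s` is the smallest entry of its cycle. -/
def IsCycleMin {n : ℕ} (π : Equiv.Perm (Fin n)) (s : Fin n) : Prop :=
  ∀ i : ℕ, s ≤ (π ^ i) s

/-- `CS_n`: permutations avoiding simsun cycle successions, i.e. for every `k`,
deleting the entries `> k` from each cycle of the standard cycle form leaves no cycle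
containing two adjacent entries `j, j+1` in that order. -/
def InCS {n : ℕ} (π : Equiv.Perm (Fin n)) : Prop :=
  ∀ k : ℕ, ∀ s : Fin n, IsCycleMin π s →
    ¬ hasSuccession ((cycleWord π s).filter (fun x => x ≤ k))


namespace CS
open Equiv Equiv.Perm Function List Finset

variable {M : ℕ}

lemma mem_periodicPts (f : Perm (Fin M)) (x : Fin M) : x ∈ periodicPts f := by
  refine ⟨orderOf f, orderOf_pos f, ?_⟩
  show f^[orderOf f] x = x
  rw [← Equiv.Perm.coe_pow, pow_orderOf_eq_one]; rfl

lemma isPeriodicPt_pow (f : Perm (Fin M)) (x : Fin M) {m : ℕ} (h : (f ^ m) x = x) :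
    IsPeriodicPt f m x := by
  show f^[m] x = x
  rwa [← Equiv.Perm.coe_pow]

lemma minimalPeriod_pos (f : Perm (Fin M)) (x : Fin M) : 0 < minimalPeriod f x :=
  minimalPeriod_pos_of_mem_periodicPts (mem_periodicPts f x)

lemma pow_minimalPeriod (f : Perm (Fin M)) (x : Fin M) :
    (f ^ minimalPeriod f x) x = x := by
  have := isPeriodicPt_minimalPeriod f x
  rw [IsPeriodicPt, IsFixedPt, ← Equiv.Perm.coe_pow] at this
  exact this

lemma orderOf_cycleOf_eq (f : Perm (Fin M)) (x : Fin M) :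
    orderOf (f.cycleOf x) = minimalPeriod f x := by
  apply Nat.dvd_antisymm
  · apply orderOf_dvd_of_pow_eq_one
    apply Equiv.ext
    intro y
    by_cases h : f.SameCycle x y
    · obtain ⟨i, -, rfl⟩ := h.exists_pow_eq'
      calc (f.cycleOf x ^ minimalPeriod f x) ((f ^ i) x)
          = (f.cycleOf x ^ minimalPeriod f x) ((f.cycleOf x ^ i) x) := by
            rw [Equiv.Perm.cycleOf_pow_apply_self]
        _ = (f.cycleOf x ^ (minimalPeriod f x + i)) x := by rw [← Equiv.Perm.mul_apply, ← pow_add]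
        _ = (f ^ (minimalPeriod f x + i)) x := Equiv.Perm.cycleOf_pow_apply_self f x _
        _ = (f ^ i) ((f ^ minimalPeriod f x) x) := by rw [add_comm, pow_add, Equiv.Perm.mul_apply]
        _ = (f ^ i) x := by rw [pow_minimalPeriod]
        _ = (1 : Perm (Fin M)) ((f ^ i) x) := rfl
    · have : ∀ m : ℕ, (f.cycleOf x ^ m) y = y := by
        intro m
        induction m with
        | zero => rfl
        | succ m ih => rw [pow_succ', Equiv.Perm.mul_apply, ih,
            Equiv.Perm.cycleOf_apply_of_not_sameCycle h]
      simp [this]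
  · apply Function.IsPeriodicPt.minimalPeriod_dvd
    apply isPeriodicPt_pow
    rw [← Equiv.Perm.cycleOf_pow_apply_self, pow_orderOf_eq_one]; rfl

lemma cycleWord_eq (π : Perm (Fin M)) (s : Fin M) :
    cycleWord π s = (List.range (minimalPeriod π s)).map fun i => (((π ^ i) s : ℕ) + 1) := by
  rw [cycleWord, orderOf_cycleOf_eq]

lemma mem_cycleWord_le {π : Perm (Fin M)} {s : Fin M} {x : ℕ} (hx : x ∈ cycleWord π s) :
    x ≤ M := by
  rw [cycleWord] at hx
  obtain ⟨i, -, rfl⟩ := List.mem_map.1 hx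
  exact ((π ^ i) s).isLt

lemma not_hasSuccession_iff {w : List ℕ} :
    ¬ hasSuccession w ↔ List.Chain' (fun x y => y ≠ x + 1) w := by
  unfold List.Chain'
  rw [List.isChain_iff_getElem, hasSuccession]
  push_neg
  constructor
  · intro h i hi
    have h1 : i + 1 < w.length := by omega
    have := h i h1
    rwa [List.getD_eq_getElem _ _ h1, List.getD_eq_getElem _ _ (by omega)] at this
  · intro h i hi
    have := h i (by omega)
    rwa [List.getD_eq_getElem _ _ hi, List.getD_eq_getElem _ _ (by omega : i < w.length)]

lemma isCycleMin_of_fixed {π : Perm (Fin M)} {s : Fin M} (h : π s = s) : IsCycleMin π s := by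
  intro i
  have : (π ^ i) s = s := by
    induction i with
    | zero => rfl
    | succ i ih => rw [pow_succ', Equiv.Perm.mul_apply, ih, h]
  rw [this]

lemma exists_cycleMin (π : Perm (Fin M)) (x : Fin M) :
    ∃ s, IsCycleMin π s ∧ π.SameCycle s x := by
  have hne : (univ.filter fun y => π.SameCycle x y).Nonempty :=
    ⟨x, by simp [Equiv.Perm.SameCycle.refl]⟩
  set s := (univ.filter fun y => π.SameCycle x y).min' hne with hs
  have hsmem : π.SameCycle x s := by
    have := (univ.filter fun y => π.SameCycle x y).min'_mem hne
    simpa using this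
  refine ⟨s, ?_, hsmem.symm⟩
  intro i
  apply Finset.min'_le
  simp only [Finset.mem_filter, Finset.mem_univ, true_and]
  exact hsmem.trans ⟨(i : ℤ), rfl⟩

lemma cycleMin_unique {π : Perm (Fin M)} {s t : Fin M} (hs : IsCycleMin π s)
    (ht : IsCycleMin π t) (h : π.SameCycle s t) : s = t := by
  obtain ⟨i, -, rfl⟩ := h.exists_pow_eq'
  obtain ⟨j, -, hj⟩ := h.symm.exists_pow_eq'
  exact le_antisymm (hs i) ((ht j).trans_eq hj)


lemma cycPerm_eq_card_mins (π : Perm (Fin M)) :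
    cycPerm π = (Finset.univ.filter fun s => IsCycleMin π s).card := by
  have hsplit :
      (Finset.univ.filter fun s => IsCycleMin π s).card
        = ((Finset.univ.filter fun s => IsCycleMin π s).filter fun s => π s = s).card
          + ((Finset.univ.filter fun s => IsCycleMin π s).filter fun s => ¬ π s = s).card :=
    (Finset.card_filter_add_card_filter_not (fun s => π s = s)).symm
  have hfix : ((Finset.univ.filter fun s => IsCycleMin π s).filter fun s => π s = s)
      = (Finset.univ.filter fun s => π s = s) := by
    rw [Finset.filter_filter]
    apply Finset.filter_congr
    intro s _
    constructor
    · rintro ⟨-, h⟩; exact h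
    · intro h; exact ⟨isCycleMin_of_fixed h, h⟩
  have hcard : ((Finset.univ.filter fun s => IsCycleMin π s).filter fun s => ¬ π s = s).card
      = π.cycleFactorsFinset.card := by
    apply Finset.card_bij (fun s _ => π.cycleOf s)
    · intro s hs
      simp only [Finset.mem_filter] at hs
      rw [Equiv.Perm.cycleOf_mem_cycleFactorsFinset_iff, Equiv.Perm.mem_support]
      exact hs.2
    · intro s hs t ht h
      simp only [Finset.mem_filter, Finset.mem_univ, true_and] at hs ht
      apply cycleMin_unique hs.1 ht.1
      have : s ∈ (π.cycleOf t).support := by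
        rw [← h, Equiv.Perm.mem_support_cycleOf_iff]
        exact ⟨Equiv.Perm.SameCycle.refl _ _, Equiv.Perm.mem_support.2 hs.2⟩
      exact ((Equiv.Perm.mem_support_cycleOf_iff.1 this).1).symm
    · intro c hc
      have hc' := Equiv.Perm.mem_cycleFactorsFinset_iff.1 hc
      obtain ⟨x, hx⟩ := hc'.1.nonempty_support
      have hcx : c = π.cycleOf x := Equiv.Perm.cycle_is_cycleOf hx hc
      have hπx : π x ≠ x := by
        have := hc'.2 x hx
        rw [← this]
        exact Equiv.Perm.mem_support.1 hx
      obtain ⟨s, hmin, hsc⟩ := exists_cycleMin π x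
      have hπs : π s ≠ s := by
        intro hfix2
        have h1 : π.cycleOf s = 1 := (Equiv.Perm.cycleOf_eq_one_iff π).2 hfix2
        have : π.cycleOf x = 1 := by rw [← hsc.cycleOf_eq, h1]
        rw [Equiv.Perm.cycleOf_eq_one_iff] at this
        exact hπx this
      refine ⟨s, ?_, ?_⟩
      · simp only [Finset.mem_filter, Finset.mem_univ, true_and]
        exact ⟨hmin, hπs⟩
      · rw [hcx, hsc.cycleOf_eq]
  rw [cycPerm, hsplit, hfix, hcard, Equiv.Perm.cycleType_def, Multiset.card_map, add_comm]
  rfl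

/-- extension of `τ` to `Fin (M+1)` fixing the last point -/
def extPerm (τ : Perm (Fin M)) : Perm (Fin (M + 1)) :=
  finSuccEquivLast.symm.permCongr τ.optionCongr

@[simp] lemma extPerm_castSucc (τ : Perm (Fin M)) (j : Fin M) :
    extPerm τ j.castSucc = (τ j).castSucc := by
  simp [extPerm, Equiv.permCongr_apply]

@[simp] lemma extPerm_last (τ : Perm (Fin M)) :
    extPerm τ (Fin.last M) = Fin.last M := by
  simp [extPerm, Equiv.permCongr_apply]

/-- insertion of the new largest element `M+1` into `τ`, either as fixed point (`none`)
or into the cycle right after `a` (`some a`). -/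
def insPerm (τ : Perm (Fin M)) : Option (Fin M) → Perm (Fin (M + 1))
  | none => extPerm τ
  | some a => extPerm τ * Equiv.swap a.castSucc (Fin.last M)

lemma insPerm_none (τ : Perm (Fin M)) : insPerm τ none = extPerm τ := rfl

lemma insPerm_some_self (τ : Perm (Fin M)) (a : Fin M) :
    insPerm τ (some a) a.castSucc = Fin.last M := by
  simp [insPerm, Equiv.swap_apply_left]

lemma insPerm_some_last (τ : Perm (Fin M)) (a : Fin M) :
    insPerm τ (some a) (Fin.last M) = (τ a).castSucc := by
  have : Fin.last M ≠ a.castSucc := (Fin.castSucc_lt_last a).ne'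
  simp [insPerm, Equiv.swap_apply_of_ne_of_ne this.symm, Equiv.swap_apply_right]

lemma insPerm_some_ne (τ : Perm (Fin M)) (a : Fin M) {j : Fin M} (h : j ≠ a) :
    insPerm τ (some a) j.castSucc = (τ j).castSucc := by
  have h1 : j.castSucc ≠ a.castSucc := fun hc => h (Fin.castSucc_injective M hc)
  have h2 : j.castSucc ≠ Fin.last M := (Fin.castSucc_lt_last j).ne
  simp [insPerm, Equiv.swap_apply_of_ne_of_ne h1 h2]

lemma extPerm_pow_castSucc (τ : Perm (Fin M)) (i : ℕ) (j : Fin M) :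
    (extPerm τ ^ i) j.castSucc = ((τ ^ i) j).castSucc := by
  induction i with
  | zero => rfl
  | succ i ih => rw [pow_succ', Equiv.Perm.mul_apply, ih, extPerm_castSucc, pow_succ',
      Equiv.Perm.mul_apply]

lemma extPerm_pow_last (τ : Perm (Fin M)) (i : ℕ) :
    (extPerm τ ^ i) (Fin.last M) = Fin.last M := by
  induction i with
  | zero => rfl
  | succ i ih => rw [pow_succ', Equiv.Perm.mul_apply, ih, extPerm_last]

lemma minimalPeriod_extPerm_castSucc (τ : Perm (Fin M)) (j : Fin M) :
    minimalPeriod (extPerm τ) j.castSucc = minimalPeriod τ j := by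
  apply _root_.le_antisymm
  · apply Function.IsPeriodicPt.minimalPeriod_le (minimalPeriod_pos τ j)
    apply isPeriodicPt_pow
    rw [extPerm_pow_castSucc, pow_minimalPeriod]
  · apply Function.IsPeriodicPt.minimalPeriod_le (minimalPeriod_pos (extPerm τ) j.castSucc)
    apply isPeriodicPt_pow
    have := pow_minimalPeriod (extPerm τ) j.castSucc
    rw [extPerm_pow_castSucc] at this
    exact Fin.castSucc_injective M this

lemma minimalPeriod_extPerm_last (τ : Perm (Fin M)) :
    minimalPeriod (extPerm τ) (Fin.last M) = 1 := by
  apply _root_.le_antisymm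
  · apply Function.IsPeriodicPt.minimalPeriod_le one_pos
    apply isPeriodicPt_pow
    rw [pow_one, extPerm_last]
  · exact minimalPeriod_pos (extPerm τ) (Fin.last M)

lemma cycleWord_extPerm_castSucc (τ : Perm (Fin M)) (j : Fin M) :
    cycleWord (extPerm τ) j.castSucc = cycleWord τ j := by
  rw [cycleWord_eq, cycleWord_eq, minimalPeriod_extPerm_castSucc]
  apply List.map_congr_left
  intro i _
  rw [extPerm_pow_castSucc]
  simp

lemma cycleWord_extPerm_last (τ : Perm (Fin M)) :
    cycleWord (extPerm τ) (Fin.last M) = [M + 1] := by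
  rw [cycleWord_eq, minimalPeriod_extPerm_last]
  have h1 : List.range 1 = [0] := rfl
  simp only [h1, List.map_cons, List.map_nil, pow_zero, Equiv.Perm.one_apply, Fin.val_last]

lemma isCycleMin_extPerm_castSucc_iff (τ : Perm (Fin M)) (j : Fin M) :
    IsCycleMin (extPerm τ) j.castSucc ↔ IsCycleMin τ j := by
  constructor
  · intro h i
    have := h i
    rwa [extPerm_pow_castSucc, Fin.castSucc_le_castSucc_iff] at this
  · intro h i
    rw [extPerm_pow_castSucc, Fin.castSucc_le_castSucc_iff]
    exact h i

lemma isCycleMin_extPerm_last (τ : Perm (Fin M)) : IsCycleMin (extPerm τ) (Fin.last M) :=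
  isCycleMin_of_fixed (extPerm_last τ)

lemma excPerm_extPerm (τ : Perm (Fin M)) : excPerm (extPerm τ) = excPerm τ := by
  rw [excPerm, excPerm, Finset.card_filter, Finset.card_filter, Fin.sum_univ_castSucc]
  simp [Fin.castSucc_lt_castSucc_iff]

lemma cycPerm_extPerm (τ : Perm (Fin M)) : cycPerm (extPerm τ) = cycPerm τ + 1 := by
  rw [cycPerm_eq_card_mins, cycPerm_eq_card_mins, Finset.card_filter, Finset.card_filter,
    Fin.sum_univ_castSucc]
  simp [isCycleMin_extPerm_castSucc_iff, isCycleMin_extPerm_last]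


section SomeCase

variable (τ : Perm (Fin M)) (a : Fin M)

lemma pow_mod_period (j : Fin M) (i : ℕ) :
    (τ ^ (i % minimalPeriod τ j)) j = (τ ^ i) j := by
  have := Function.iterate_mod_minimalPeriod_eq (f := ⇑τ) (x := j) (n := i)
  rwa [← Equiv.Perm.coe_pow, ← Equiv.Perm.coe_pow] at this

lemma iterate_inj {j : Fin M} {i k : ℕ} (hi : i < minimalPeriod τ j)
    (hk : k < minimalPeriod τ j) (h : (τ ^ i) j = (τ ^ k) j) : i = k := by
  rcases le_total i k with hle | hle
  · by_contra hne
    have hk' : k = (k - i) + i := by omega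
    rw [hk', pow_add, Equiv.Perm.mul_apply] at h
    have hcomm : (τ ^ (k - i)) ((τ ^ i) j) = (τ ^ i) ((τ ^ (k - i)) j) := by
      rw [← Equiv.Perm.mul_apply, ← Equiv.Perm.mul_apply, ← pow_add, ← pow_add, add_comm]
    rw [hcomm] at h
    have h2 : (τ ^ (k - i)) j = j := (Equiv.injective _ h.symm)
    have := Function.IsPeriodicPt.minimalPeriod_le (by omega) (isPeriodicPt_pow τ j h2)
    omega
  · by_contra hne
    have hk' : i = (i - k) + k := by omega
    rw [hk', pow_add, Equiv.Perm.mul_apply] at h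
    have hcomm : (τ ^ (i - k)) ((τ ^ k) j) = (τ ^ k) ((τ ^ (i - k)) j) := by
      rw [← Equiv.Perm.mul_apply, ← Equiv.Perm.mul_apply, ← pow_add, ← pow_add, add_comm]
    rw [hcomm] at h
    have h2 : (τ ^ (i - k)) j = j := (Equiv.injective _ h)
    have := Function.IsPeriodicPt.minimalPeriod_le (by omega) (isPeriodicPt_pow τ j h2)
    omega

lemma exists_hit (j : Fin M) (h : τ.SameCycle j a) :
    ∃ d < minimalPeriod τ j, (τ ^ d) j = a := by
  obtain ⟨i, -, hi⟩ := h.exists_pow_eq'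
  exact ⟨i % minimalPeriod τ j, Nat.mod_lt _ (minimalPeriod_pos τ j),
    by rw [pow_mod_period]; exact hi⟩

lemma not_sameCycle_pow_ne {j : Fin M} (h : ¬ τ.SameCycle j a) (i : ℕ) : (τ ^ i) j ≠ a := by
  intro hc
  exact h ⟨(i : ℤ), by rw [zpow_natCast]; exact hc⟩

lemma ins_pow_castSucc_of_not {j : Fin M} (h : ∀ i, (τ ^ i) j ≠ a) (i : ℕ) :
    ((insPerm τ (some a)) ^ i) j.castSucc = ((τ ^ i) j).castSucc := by
  induction i with
  | zero => rfl
  | succ i ih => rw [pow_succ', Equiv.Perm.mul_apply, ih, insPerm_some_ne τ a (h i),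
      pow_succ', Equiv.Perm.mul_apply]

variable {τ a}
variable {j : Fin M} {d : ℕ} (hd : d < minimalPeriod τ j) (hda : (τ ^ d) j = a)

section Formulas
include hd hda

lemma ins_pow_A {i : ℕ} (hi : i ≤ d) :
    ((insPerm τ (some a)) ^ i) j.castSucc = ((τ ^ i) j).castSucc := by
  induction i with
  | zero => rfl
  | succ i ih =>
    have hne : (τ ^ i) j ≠ a := by
      intro hc
      have : i = d := iterate_inj τ (by omega) hd (hc.trans hda.symm)
      omega
    rw [pow_succ', Equiv.Perm.mul_apply, ih (by omega), insPerm_some_ne τ a hne,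
      pow_succ', Equiv.Perm.mul_apply]

lemma ins_pow_B : ((insPerm τ (some a)) ^ (d + 1)) j.castSucc = Fin.last M := by
  rw [pow_succ', Equiv.Perm.mul_apply, ins_pow_A hd hda le_rfl, hda, insPerm_some_self]

lemma ins_pow_C {i : ℕ} (h1 : d + 1 ≤ i) (h2 : i ≤ minimalPeriod τ j) :
    ((insPerm τ (some a)) ^ (i + 1)) j.castSucc = ((τ ^ i) j).castSucc := by
  obtain ⟨t, rfl⟩ : ∃ t, i = d + 1 + t := ⟨i - (d+1), by omega⟩
  clear h1
  induction t with
  | zero =>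
    simp only [Nat.add_zero]
    rw [pow_succ', Equiv.Perm.mul_apply, ins_pow_B hd hda, insPerm_some_last,
      pow_succ', Equiv.Perm.mul_apply, hda]
  | succ t ih =>
    have hne : (τ ^ (d + 1 + t)) j ≠ a := by
      intro hc
      have : d + 1 + t = d := iterate_inj τ (by omega) hd (hc.trans hda.symm)
      omega
    have e1 : d + 1 + (t + 1) + 1 = (d + 1 + t + 1) + 1 := by omega
    have e2 : d + 1 + (t + 1) = (d + 1 + t) + 1 := by omega
    rw [e1, pow_succ', Equiv.Perm.mul_apply, ih (by omega), insPerm_some_ne τ a hne, e2,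
      pow_succ', Equiv.Perm.mul_apply]

lemma ins_pow_D :
    ((insPerm τ (some a)) ^ (minimalPeriod τ j + 1)) j.castSucc = j.castSucc := by
  rw [ins_pow_C hd hda (by omega) le_rfl, pow_minimalPeriod]

lemma minimalPeriod_ins :
    minimalPeriod (insPerm τ (some a)) j.castSucc = minimalPeriod τ j + 1 := by
  set p := minimalPeriod τ j with hp
  apply _root_.le_antisymm
  · exact Function.IsPeriodicPt.minimalPeriod_le (by omega)
      (isPeriodicPt_pow _ _ (ins_pow_D hd hda))
  · have hmpos := minimalPeriod_pos (insPerm τ (some a)) j.castSucc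
    have hper := pow_minimalPeriod (insPerm τ (some a)) j.castSucc
    by_contra hlt
    push_neg at hlt
    revert hmpos hper hlt
    generalize minimalPeriod (⇑(insPerm τ (some a))) j.castSucc = m
    intro hmpos hper hlt
    have hmle : m ≤ p := by omega
    rcases lt_trichotomy m (d + 1) with h1 | h1 | h1
    · rw [ins_pow_A hd hda (by omega)] at hper
      have h2 : (τ ^ m) j = j := Fin.castSucc_injective M hper
      have := Function.IsPeriodicPt.minimalPeriod_le hmpos (isPeriodicPt_pow τ j h2)
      omega
    · rw [h1, ins_pow_B hd hda] at hper
      exact (Fin.castSucc_lt_last j).ne' hper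
    · obtain ⟨i, rfl⟩ : ∃ i, m = i + 1 := ⟨m - 1, by omega⟩
      rw [ins_pow_C hd hda (by omega) (by omega)] at hper
      have h2 : (τ ^ i) j = j := Fin.castSucc_injective M hper
      have := Function.IsPeriodicPt.minimalPeriod_le (by omega) (isPeriodicPt_pow τ j h2)
      omega

end Formulas

end SomeCase


section SomeCase
variable {τ : Perm (Fin M)} {a : Fin M}

lemma cycleWord_ins_sameCycle {j : Fin M} {d : ℕ} (hd : d < minimalPeriod τ j)
    (hda : (τ ^ d) j = a) :
    cycleWord (insPerm τ (some a)) j.castSucc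
      = (cycleWord τ j).take (d + 1) ++ (M + 1) :: (cycleWord τ j).drop (d + 1) := by
  have hp := minimalPeriod_pos τ j
  have htake : (cycleWord τ j).take (d + 1)
      = (List.range (d + 1)).map (fun i => (((τ ^ i) j : ℕ) + 1)) := by
    rw [cycleWord_eq, ← List.map_take, List.take_range]
    congr 2
    omega
  have hdrop : (cycleWord τ j).drop (d + 1)
      = (List.range (minimalPeriod τ j - (d + 1))).map
          (fun t => (((τ ^ (d + 1 + t)) j : ℕ) + 1)) := by
    rw [cycleWord_eq]
    have hr : List.range (minimalPeriod τ j)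
        = List.range (d + 1)
          ++ (List.range (minimalPeriod τ j - (d + 1))).map (fun x => (d + 1) + x) := by
      rw [← List.range_add]; congr 1; omega
    rw [hr, List.map_append, List.drop_left' (by simp), List.map_map]
    rfl
  rw [cycleWord_eq, minimalPeriod_ins hd hda, htake, hdrop]
  have hsplit : List.range (minimalPeriod τ j + 1)
      = List.range (d + 1)
        ++ (List.range (minimalPeriod τ j - d)).map (fun x => (d + 1) + x) := by
    rw [← List.range_add]; congr 1; omega
  have hsplit2 : List.range (minimalPeriod τ j - d)
      = 0 :: (List.range (minimalPeriod τ j - (d + 1))).map (fun x => 1 + x) := by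
    have h1 : minimalPeriod τ j - d = 1 + (minimalPeriod τ j - (d + 1)) := by omega
    rw [h1, List.range_add]
    rfl
  rw [hsplit, List.map_append, hsplit2, List.map_map, List.map_cons, List.map_map]
  congr 1
  · apply List.map_congr_left
    intro i hi
    rw [List.mem_range] at hi
    rw [ins_pow_A hd hda (by omega : i ≤ d)]
    simp
  · congr 1
    · show ((insPerm τ (some a) ^ (d + 1 + 0)) j.castSucc : ℕ) + 1 = M + 1
      simp only [Nat.add_zero]
      rw [ins_pow_B hd hda]
      simp
    · apply List.map_congr_left
      intro t ht
      rw [List.mem_range] at ht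
      show ((insPerm τ (some a) ^ (d + 1 + (1 + t))) j.castSucc : ℕ) + 1
        = (((τ ^ (d + 1 + t)) j : ℕ) + 1)
      have h2 : d + 1 + (1 + t) = (d + 1 + t) + 1 := by omega
      rw [h2, ins_pow_C hd hda (by omega) (by omega)]
      simp

lemma ins_pow_not_sameCycle {j : Fin M} (h : ¬ τ.SameCycle j a) (i : ℕ) :
    ((insPerm τ (some a)) ^ i) j.castSucc = ((τ ^ i) j).castSucc := by
  induction i with
  | zero => rfl
  | succ i ih =>
    have hne : (τ ^ i) j ≠ a := fun hc => h ⟨(i : ℤ), by rw [zpow_natCast]; exact hc⟩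
    rw [pow_succ', Equiv.Perm.mul_apply, ih, insPerm_some_ne τ a hne, pow_succ',
      Equiv.Perm.mul_apply]

lemma minimalPeriod_ins_not_sameCycle {j : Fin M} (h : ¬ τ.SameCycle j a) :
    minimalPeriod (insPerm τ (some a)) j.castSucc = minimalPeriod τ j := by
  apply _root_.le_antisymm
  · apply Function.IsPeriodicPt.minimalPeriod_le (minimalPeriod_pos τ j)
    apply isPeriodicPt_pow
    rw [ins_pow_not_sameCycle h, pow_minimalPeriod]
  · apply Function.IsPeriodicPt.minimalPeriod_le (minimalPeriod_pos _ _)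
    apply isPeriodicPt_pow
    have := pow_minimalPeriod (insPerm τ (some a)) j.castSucc
    rw [ins_pow_not_sameCycle h] at this
    exact Fin.castSucc_injective M this

lemma cycleWord_ins_not_sameCycle {j : Fin M} (h : ¬ τ.SameCycle j a) :
    cycleWord (insPerm τ (some a)) j.castSucc = cycleWord τ j := by
  rw [cycleWord_eq, cycleWord_eq, minimalPeriod_ins_not_sameCycle h]
  apply List.map_congr_left
  intro i _
  rw [ins_pow_not_sameCycle h]
  simp

lemma ins_reaches (s : Fin M) (i : ℕ) :
    ∃ m, ((insPerm τ (some a)) ^ m) s.castSucc = ((τ ^ i) s).castSucc := by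
  induction i with
  | zero => exact ⟨0, rfl⟩
  | succ i ih =>
    obtain ⟨m, hm⟩ := ih
    by_cases hc : (τ ^ i) s = a
    · refine ⟨m + 2, ?_⟩
      have h1 : ((insPerm τ (some a)) ^ (m + 1)) s.castSucc = Fin.last M := by
        rw [pow_succ', Equiv.Perm.mul_apply, hm, hc, insPerm_some_self]
      have h2 : m + 2 = (m + 1) + 1 := rfl
      rw [h2, pow_succ', Equiv.Perm.mul_apply, h1, insPerm_some_last, pow_succ',
        Equiv.Perm.mul_apply, hc]
    · refine ⟨m + 1, ?_⟩
      rw [pow_succ', Equiv.Perm.mul_apply, hm, insPerm_some_ne τ a hc, pow_succ',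
        Equiv.Perm.mul_apply]

lemma ins_shape (s : Fin M) (m : ℕ) :
    (((insPerm τ (some a)) ^ m) s.castSucc = Fin.last M ∧ τ.SameCycle s a)
      ∨ ∃ i, ((insPerm τ (some a)) ^ m) s.castSucc = ((τ ^ i) s).castSucc := by
  induction m with
  | zero => exact Or.inr ⟨0, rfl⟩
  | succ m ih =>
    rcases ih with ⟨hl, hsc⟩ | ⟨i, hi⟩
    · right
      obtain ⟨i, -, hi⟩ := hsc.exists_pow_eq'
      refine ⟨i + 1, ?_⟩
      rw [pow_succ', Equiv.Perm.mul_apply, hl, insPerm_some_last, pow_succ',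
        Equiv.Perm.mul_apply, hi]
    · by_cases hc : (τ ^ i) s = a
      · left
        refine ⟨?_, ⟨(i : ℤ), by rw [zpow_natCast]; exact hc⟩⟩
        rw [pow_succ', Equiv.Perm.mul_apply, hi, hc, insPerm_some_self]
      · right
        exact ⟨i + 1, by rw [pow_succ', Equiv.Perm.mul_apply, hi, insPerm_some_ne τ a hc,
          pow_succ', Equiv.Perm.mul_apply]⟩

lemma isCycleMin_ins_some_iff (s : Fin M) :
    IsCycleMin (insPerm τ (some a)) s.castSucc ↔ IsCycleMin τ s := by
  constructor
  · intro h i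
    obtain ⟨m, hm⟩ := ins_reaches s i
    have h2 := h m
    rwa [hm, Fin.castSucc_le_castSucc_iff] at h2
  · intro h m
    rcases ins_shape s m with ⟨hl, -⟩ | ⟨i, hi⟩
    · rw [hl]; exact (Fin.castSucc_lt_last s).le
    · rw [hi, Fin.castSucc_le_castSucc_iff]; exact h i

lemma not_isCycleMin_ins_some_last :
    ¬ IsCycleMin (insPerm τ (some a)) (Fin.last M) := by
  intro h
  have h2 := h 1
  rw [pow_one, insPerm_some_last] at h2
  exact absurd h2 (not_le.2 (Fin.castSucc_lt_last (τ a)))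

lemma cycPerm_ins_some : cycPerm (insPerm τ (some a)) = cycPerm τ := by
  rw [cycPerm_eq_card_mins, cycPerm_eq_card_mins, Finset.card_filter, Finset.card_filter,
    Fin.sum_univ_castSucc]
  simp [isCycleMin_ins_some_iff, not_isCycleMin_ins_some_last]

lemma excPerm_ins_some :
    excPerm (insPerm τ (some a)) = if τ a ≤ a then excPerm τ + 1 else excPerm τ := by
  have hE : excPerm τ = (∑ i ∈ Finset.univ.erase a, if i < τ i then 1 else 0)
      + (if a < τ a then 1 else 0) := by
    rw [excPerm, Finset.card_filter, ← Finset.sum_erase_add _ _ (Finset.mem_univ a)]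
  have hL : excPerm (insPerm τ (some a))
      = (∑ i ∈ Finset.univ.erase a, if i < τ i then 1 else 0) + 1 := by
    rw [excPerm, Finset.card_filter, Fin.sum_univ_castSucc]
    have hlast : ¬ (Fin.last M < insPerm τ (some a) (Fin.last M)) := by
      rw [insPerm_some_last]; exact not_lt.2 (Fin.castSucc_lt_last (τ a)).le
    rw [if_neg hlast, add_zero, ← Finset.sum_erase_add _ _ (Finset.mem_univ a)]
    congr 1
    · apply Finset.sum_congr rfl
      intro i hi
      rw [insPerm_some_ne τ a (Finset.mem_erase.1 hi).1]
      simp [Fin.castSucc_lt_castSucc_iff]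
    · rw [insPerm_some_self]
      simp [Fin.castSucc_lt_last]
  by_cases h : τ a ≤ a
  · rw [if_pos h, hL, hE, if_neg (not_lt.2 h)]
  · rw [if_neg h, hL, hE, if_pos (not_le.1 h)]

end SomeCase

/-! helpers -/

lemma not_hasSuccession_short {w : List ℕ} (h : w.length ≤ 1) : ¬ hasSuccession w := by
  rintro ⟨i, hi, -⟩
  omega

lemma filter_eq_self_of_le {w : List ℕ} {k : ℕ} (h : ∀ x ∈ w, x ≤ k) :
    w.filter (fun x => x ≤ k) = w := by
  apply List.filter_eq_self.2
  intro x hx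
  simpa using h x hx

lemma filter_le_clamp {w : List ℕ} (hw : ∀ x ∈ w, x ≤ M) (k : ℕ) :
    w.filter (fun x => x ≤ k) = w.filter (fun x => x ≤ min k M) := by
  apply List.filter_congr
  intro x hx
  have := hw x hx
  simp only [decide_eq_decide]
  omega

lemma filter_insert_gt (w₁ w₂ : List ℕ) {k : ℕ} (hk : k ≤ M) :
    (w₁ ++ (M + 1) :: w₂).filter (fun x => x ≤ k)
      = (w₁ ++ w₂).filter (fun x => x ≤ k) := by
  simp only [List.filter_append, List.filter_cons]
  have : ¬ (M + 1 ≤ k) := by omega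
  simp [this]

lemma length_cycleWord (π : Perm (Fin M)) (s : Fin M) :
    (cycleWord π s).length = minimalPeriod π s := by
  rw [cycleWord_eq, List.length_map, List.length_range]

lemma cycleWord_getElem (π : Perm (Fin M)) (s : Fin M) {i : ℕ}
    (hi : i < minimalPeriod π s) :
    (cycleWord π s)[i]'(by rw [length_cycleWord]; exact hi) = ((π ^ i) s : ℕ) + 1 := by
  simp [cycleWord_eq]

lemma take_getLast {τ : Perm (Fin M)} {a : Fin M} {j : Fin M} {d : ℕ}
    (hd : d < minimalPeriod τ j) (hda : (τ ^ d) j = a) :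
    ((cycleWord τ j).take (d + 1)).getLast? = some ((a : ℕ) + 1) := by
  have h1 : (cycleWord τ j).take (d + 1)
      = (List.range (d + 1)).map (fun i => (((τ ^ i) j : ℕ) + 1)) := by
    rw [cycleWord_eq, ← List.map_take, List.take_range]
    congr 2
    omega
  rw [h1, List.range_succ, List.map_append]
  simp [hda]

/-! the `none` case -/

lemma InCS_extPerm_iff (τ : Perm (Fin M)) : InCS (extPerm τ) ↔ InCS τ := by
  constructor
  · intro h k s hmin
    have := h k s.castSucc ((isCycleMin_extPerm_castSucc_iff τ s).2 hmin)
    rwa [cycleWord_extPerm_castSucc] at this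
  · intro h k s hmin
    induction s using Fin.lastCases with
    | last =>
      apply not_hasSuccession_short
      calc ((cycleWord (extPerm τ) (Fin.last M)).filter (fun x => x ≤ k)).length
          ≤ (cycleWord (extPerm τ) (Fin.last M)).length := List.length_filter_le _ _
        _ ≤ 1 := by rw [cycleWord_extPerm_last]; simp
    | cast s =>
      rw [cycleWord_extPerm_castSucc]
      exact h k s ((isCycleMin_extPerm_castSucc_iff τ s).1 hmin)

/-! the `some` case -/

section SomeCase
variable {τ : Perm (Fin M)} {a : Fin M}

lemma mem_cycleWord_succ_le {s : Fin (M + 1)} {π : Perm (Fin (M + 1))} {x : ℕ}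
    (hx : x ∈ cycleWord π s) : x ≤ M + 1 := mem_cycleWord_le hx

lemma InCS_ins_some_of (hτ : InCS τ) (hbad : (a : ℕ) + 1 ≠ M) :
    InCS (insPerm τ (some a)) := by
  intro k s' hmin'
  induction s' using Fin.lastCases with
  | last => exact absurd hmin' not_isCycleMin_ins_some_last
  | cast s =>
    have hmin : IsCycleMin τ s := (isCycleMin_ins_some_iff s).1 hmin'
    by_cases hsc : τ.SameCycle s a
    · obtain ⟨d, hd, hda⟩ := exists_hit τ a s hsc
      rw [cycleWord_ins_sameCycle hd hda]
      set w₁ := (cycleWord τ s).take (d + 1) with hw₁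
      set w₂ := (cycleWord τ s).drop (d + 1) with hw₂
      have hw : w₁ ++ w₂ = cycleWord τ s := List.take_append_drop _ _
      by_cases hk : k ≤ M
      · rw [filter_insert_gt w₁ w₂ hk, hw]
        exact hτ k s hmin
      · have hall : ∀ x ∈ w₁ ++ (M + 1) :: w₂, x ≤ k := by
          intro x hx
          rcases List.mem_append.1 hx with h1 | h1
          · have : x ∈ cycleWord τ s := hw ▸ List.mem_append_left w₂ h1
            have := mem_cycleWord_le this
            omega
          · rcases List.mem_cons.1 h1 with rfl | h1
            · omega
            · have : x ∈ cycleWord τ s := hw ▸ List.mem_append_right w₁ h1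
              have := mem_cycleWord_le this
              omega
        rw [filter_eq_self_of_le hall, not_hasSuccession_iff]
        have hchain : List.Chain' (fun x y => y ≠ x + 1) (w₁ ++ w₂) := by
          have h0 := hτ M s hmin
          rw [filter_eq_self_of_le (fun x hx => mem_cycleWord_le hx),
            not_hasSuccession_iff] at h0
          rwa [hw]
        unfold List.Chain' at hchain ⊢
        rw [List.isChain_append] at hchain
        rw [List.isChain_append]
        refine ⟨hchain.1, ?_, ?_⟩
        · rw [List.isChain_cons]
          refine ⟨?_, hchain.2.1⟩
          intro y hy
          have hyw : y ∈ w₂ := List.mem_of_mem_head? hy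
          have : y ∈ cycleWord τ s := hw ▸ List.mem_append_right w₁ hyw
          have := mem_cycleWord_le this
          omega
        · intro x hx y hy
          rw [take_getLast hd hda] at hx
          simp only [Option.mem_def, Option.some_inj] at hx
          subst hx
          simp only [List.head?_cons, Option.mem_def, Option.some_inj] at hy
          subst hy
          omega
    · rw [cycleWord_ins_not_sameCycle hsc]
      exact hτ k s hmin

lemma InCS_of_ins_some (h : InCS (insPerm τ (some a))) : InCS τ := by
  intro k s hmin
  have hbound : ∀ x ∈ cycleWord τ s, x ≤ M := fun x hx => mem_cycleWord_le hx
  rw [filter_le_clamp hbound k]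
  set k0 := min k M with hk0
  have hk0M : k0 ≤ M := min_le_right _ _
  have hmin' : IsCycleMin (insPerm τ (some a)) s.castSucc := (isCycleMin_ins_some_iff s).2 hmin
  by_cases hsc : τ.SameCycle s a
  · obtain ⟨d, hd, hda⟩ := exists_hit τ a s hsc
    have h2 := h k0 s.castSucc hmin'
    rw [cycleWord_ins_sameCycle hd hda, filter_insert_gt _ _ hk0M,
      List.take_append_drop] at h2
    exact h2
  · have h2 := h k0 s.castSucc hmin'
    rwa [cycleWord_ins_not_sameCycle hsc] at h2

lemma not_InCS_ins_bad (hbad : (a : ℕ) + 1 = M) : ¬ InCS (insPerm τ (some a)) := by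
  intro h
  obtain ⟨s, hmin, hsc⟩ := exists_cycleMin τ a
  obtain ⟨d, hd, hda⟩ := exists_hit τ a s hsc
  have hmin' : IsCycleMin (insPerm τ (some a)) s.castSucc := (isCycleMin_ins_some_iff s).2 hmin
  have h2 := h (M + 1) s.castSucc hmin'
  apply h2
  rw [filter_eq_self_of_le (fun x hx => mem_cycleWord_le hx)]
  rw [cycleWord_ins_sameCycle hd hda]
  set w := cycleWord τ s with hwdef
  have hlen : w.length = minimalPeriod τ s := length_cycleWord τ s
  have hlen1 : (w.take (d + 1)).length = d + 1 := by
    rw [List.length_take]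
    omega
  refine ⟨d, ?_, ?_⟩
  · rw [List.length_append]
    simp only [List.length_cons]
    omega
  · have e1 : (w.take (d + 1) ++ (M + 1) :: w.drop (d + 1)).getD (d + 1) 0 = M + 1 := by
      rw [List.getD_eq_getElem _ _ (by rw [List.length_append, hlen1]; simp)]
      rw [List.getElem_append_right (by omega)]
      simp [hlen1]
    have e2 : (w.take (d + 1) ++ (M + 1) :: w.drop (d + 1)).getD d 0 = (a : ℕ) + 1 := by
      rw [List.getD_eq_getElem _ _ (by rw [List.length_append, hlen1]; simp; omega)]
      rw [List.getElem_append_left (by omega)]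
      rw [List.getElem_take]
      · have hh := cycleWord_getElem τ s hd
        rw [hda] at hh
        exact hh
    rw [e1, e2]
    omega

end SomeCase

lemma InCS_ins_some_iff {τ : Perm (Fin M)} {a : Fin M} :
    InCS (insPerm τ (some a)) ↔ (InCS τ ∧ (a : ℕ) + 1 ≠ M) := by
  constructor
  · intro h
    refine ⟨InCS_of_ins_some h, fun hb => not_InCS_ins_bad hb h⟩
  · rintro ⟨h1, h2⟩
    exact InCS_ins_some_of h1 h2

lemma insPerm_injective :
    Function.Injective (fun p : Perm (Fin M) × Option (Fin M) => insPerm p.1 p.2) := by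
  rintro ⟨τ, o⟩ ⟨τ', o'⟩ h
  simp only at h
  have happ : ∀ x, insPerm τ o x = insPerm τ' o' x := fun x => by rw [h]
  have ext_eq : ∀ (τ τ' : Perm (Fin M)) (o o' : Option (Fin M)),
      insPerm τ o = insPerm τ' o' → o = none → o' = none → τ = τ' := by
    intro τ τ' o o' h ho ho'
    subst ho; subst ho'
    apply Equiv.ext
    intro j
    have := congrFun (congrArg (fun (e : Perm (Fin (M+1))) => (e : Fin (M+1) → Fin (M+1))) h)
      j.castSucc
    simp only [insPerm, extPerm_castSucc] at this
    exact Fin.castSucc_injective M this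
  match o, o' with
  | none, none =>
    have := ext_eq τ τ' none none h rfl rfl
    rw [this]
  | none, some a' =>
    exfalso
    have h1 := happ (Fin.last M)
    rw [show insPerm τ none = extPerm τ from rfl, extPerm_last, insPerm_some_last] at h1
    exact (Fin.castSucc_lt_last (τ' a')).ne h1.symm
  | some a, none =>
    exfalso
    have h1 := happ (Fin.last M)
    rw [show insPerm τ' none = extPerm τ' from rfl, extPerm_last, insPerm_some_last] at h1
    exact (Fin.castSucc_lt_last (τ a)).ne h1
  | some a, some a' =>
    have haa : a = a' := by
      by_contra hne
      have h1 := happ a.castSucc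
      rw [insPerm_some_self, insPerm_some_ne τ' a' hne] at h1
      exact (Fin.castSucc_lt_last (τ' a)).ne' h1
    subst haa
    have hττ : τ = τ' := by
      apply Equiv.ext
      intro j
      by_cases hj : j = a
      · subst hj
        have h1 := happ (Fin.last M)
        rw [insPerm_some_last, insPerm_some_last] at h1
        exact Fin.castSucc_injective M h1
      · have h1 := happ j.castSucc
        rw [insPerm_some_ne τ a hj, insPerm_some_ne τ' a hj] at h1
        exact Fin.castSucc_injective M h1
    rw [hττ]

lemma insPerm_bijective :
    Function.Bijective (fun p : Perm (Fin M) × Option (Fin M) => insPerm p.1 p.2) := by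
  rw [Fintype.bijective_iff_injective_and_card]
  refine ⟨insPerm_injective, ?_⟩
  rw [Fintype.card_prod, Fintype.card_perm, Fintype.card_perm, Fintype.card_option,
    Fintype.card_fin, Fintype.card_fin, Nat.factorial_succ, mul_comm]

lemma sum_perm_succ (F : Perm (Fin (M + 1)) → ℝ) :
    ∑ σ : Perm (Fin (M + 1)), F σ
      = ∑ τ : Perm (Fin M), (F (extPerm τ) + ∑ a : Fin M, F (insPerm τ (some a))) := by
  rw [← Fintype.sum_bijective _ insPerm_bijective (fun p => F (insPerm p.1 p.2)) F
    (fun p => rfl)]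
  rw [Fintype.sum_prod_type]
  apply Finset.sum_congr rfl
  intro τ _
  rw [Fintype.sum_option]
  rfl

lemma exc_le_bound (τ : Perm (Fin M)) {a : Fin M} (h : (a : ℕ) + 1 = M) : τ a ≤ a := by
  have := (τ a).isLt
  rw [Fin.le_def]
  omega

lemma sum_ins_some (τ : Perm (Fin M)) (u v : ℝ) :
    ∑ a : Fin M, (if τ a ≤ a then v else u)
      = (excPerm τ) • u + (M - excPerm τ) • v := by
  have h1 : ∀ a : Fin M, (if τ a ≤ a then v else u) = (if a < τ a then u else v) := by
    intro a
    by_cases h : τ a ≤ a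
    · rw [if_pos h, if_neg (not_lt.2 h)]
    · rw [if_neg h, if_pos (not_le.1 h)]
  rw [Finset.sum_congr rfl (fun a _ => h1 a), Finset.sum_ite, Finset.sum_const,
    Finset.sum_const]
  have h2 : (Finset.univ.filter fun a : Fin M => a < τ a).card = excPerm τ := rfl
  have h3 : (Finset.univ.filter fun a : Fin M => ¬ a < τ a).card = M - excPerm τ := by
    have := Finset.card_filter_add_card_filter_not (s := (Finset.univ : Finset (Fin M)))
      (fun a : Fin M => a < τ a)
    rw [h2] at this
    simp only [Finset.card_univ, Fintype.card_fin] at this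
    omega
  rw [h2, h3]

lemma sum_S (g : ℕ → ℕ → ℝ) :
    ∑ σ : Perm (Fin (M + 1)), g (excPerm σ) (cycPerm σ)
      = ∑ τ : Perm (Fin M),
          (g (excPerm τ) (cycPerm τ + 1) + (excPerm τ) • g (excPerm τ) (cycPerm τ)
            + (M - excPerm τ) • g (excPerm τ + 1) (cycPerm τ)) := by
  rw [sum_perm_succ (fun σ => g (excPerm σ) (cycPerm σ))]
  apply Finset.sum_congr rfl
  intro τ _
  rw [excPerm_extPerm, cycPerm_extPerm]
  have h1 : ∀ a : Fin M, g (excPerm (insPerm τ (some a))) (cycPerm (insPerm τ (some a)))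
      = (if τ a ≤ a then g (excPerm τ + 1) (cycPerm τ) else g (excPerm τ) (cycPerm τ)) := by
    intro a
    rw [cycPerm_ins_some, excPerm_ins_some]
    by_cases h : τ a ≤ a
    · rw [if_pos h, if_pos h]
    · rw [if_neg h, if_neg h]
  rw [Finset.sum_congr rfl (fun a _ => h1 a), sum_ins_some]
  ring

lemma sum_CS {m : ℕ} (g : ℕ → ℕ → ℝ) :
    ∑ σ ∈ Finset.univ.filter (fun σ : Perm (Fin (m + 2)) => InCS σ),
        g (excPerm σ) (cycPerm σ)
      = ∑ τ ∈ Finset.univ.filter (fun τ : Perm (Fin (m + 1)) => InCS τ),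
          (g (excPerm τ) (cycPerm τ + 1) + (excPerm τ) • g (excPerm τ) (cycPerm τ)
            + (m - excPerm τ) • g (excPerm τ + 1) (cycPerm τ)) := by
  rw [Finset.sum_filter, Finset.sum_filter]
  rw [sum_perm_succ (M := m + 1)
    (fun σ => if InCS σ then g (excPerm σ) (cycPerm σ) else 0)]
  apply Finset.sum_congr rfl
  intro τ _
  have h1 : (if InCS (extPerm τ) then g (excPerm (extPerm τ)) (cycPerm (extPerm τ)) else 0)
      = (if InCS τ then g (excPerm τ) (cycPerm τ + 1) else 0) := by
    rw [excPerm_extPerm, cycPerm_extPerm]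
    by_cases h : InCS τ
    · rw [if_pos ((InCS_extPerm_iff τ).2 h), if_pos h]
    · rw [if_neg (fun hc => h ((InCS_extPerm_iff τ).1 hc)), if_neg h]
  rw [h1]
  by_cases h : InCS τ
  · rw [if_pos h]
    have h2 : ∀ a : Fin (m + 1),
        (if InCS (insPerm τ (some a))
          then g (excPerm (insPerm τ (some a))) (cycPerm (insPerm τ (some a))) else 0)
        = (if (a : ℕ) + 1 = m + 1 then 0
            else (if τ a ≤ a then g (excPerm τ + 1) (cycPerm τ)
                  else g (excPerm τ) (cycPerm τ))) := by
      intro a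
      by_cases hb : (a : ℕ) + 1 = m + 1
      · rw [if_pos hb, if_neg (fun hc => (InCS_ins_some_iff.1 hc).2 hb)]
      · rw [if_neg hb, if_pos (InCS_ins_some_iff.2 ⟨h, hb⟩), cycPerm_ins_some,
          excPerm_ins_some]
        by_cases hlt : τ a ≤ a
        · rw [if_pos hlt, if_pos hlt]
        · rw [if_neg hlt, if_neg hlt]
    rw [Finset.sum_congr rfl (fun a _ => h2 a)]
    -- now count
    rw [Finset.sum_ite, Finset.sum_const, smul_zero, zero_add]
    have hba : ∀ a : Fin (m + 1), ¬ (a : ℕ) + 1 = m + 1 → ((if τ a ≤ a then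
        g (excPerm τ + 1) (cycPerm τ) else g (excPerm τ) (cycPerm τ))
        = if a < τ a then g (excPerm τ) (cycPerm τ) else g (excPerm τ + 1) (cycPerm τ)) := by
      intro a _
      by_cases hlt : τ a ≤ a
      · rw [if_pos hlt, if_neg (not_lt.2 hlt)]
      · rw [if_neg hlt, if_pos (not_le.1 hlt)]
    rw [Finset.sum_congr rfl (fun a ha => hba a (by simpa using (Finset.mem_filter.1 ha).2))]
    rw [Finset.sum_ite, Finset.sum_const, Finset.sum_const, Finset.filter_filter,
      Finset.filter_filter]
    have c1 : (Finset.univ.filter fun a : Fin (m + 1) =>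
        ¬ (a : ℕ) + 1 = m + 1 ∧ a < τ a).card = excPerm τ := by
      have : (Finset.univ.filter fun a : Fin (m + 1) => ¬ (a : ℕ) + 1 = m + 1 ∧ a < τ a)
          = (Finset.univ.filter fun a : Fin (m + 1) => a < τ a) := by
        apply Finset.filter_congr
        intro a _
        constructor
        · rintro ⟨-, h⟩; exact h
        · intro hlt
          refine ⟨?_, hlt⟩
          intro hc
          exact absurd hlt (not_lt.2 (exc_le_bound τ hc))
      rw [this]; rfl
    have c2 : (Finset.univ.filter fun a : Fin (m + 1) =>
        ¬ (a : ℕ) + 1 = m + 1 ∧ ¬ a < τ a).card = m - excPerm τ := by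
      have htot := Finset.card_filter_add_card_filter_not
        (s := Finset.univ.filter fun a : Fin (m + 1) => ¬ (a : ℕ) + 1 = m + 1)
        (fun a : Fin (m + 1) => a < τ a)
      rw [Finset.filter_filter, Finset.filter_filter] at htot
      have hcond : (Finset.univ.filter fun a : Fin (m + 1) => ¬ (a : ℕ) + 1 = m + 1).card
          = m := by
        have : (Finset.univ.filter fun a : Fin (m + 1) => ¬ (a : ℕ) + 1 = m + 1)
            = Finset.univ.erase (Fin.last m) := by
          ext a
          simp only [Finset.mem_filter, Finset.mem_univ, true_and, Finset.mem_erase]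
          constructor
          · intro hne
            refine ⟨?_, trivial⟩
            intro hc
            subst hc
            simp at hne
          · rintro ⟨hne, -⟩ hc
            apply hne
            apply Fin.ext
            simp only [Fin.val_last]
            omega
        rw [this, Finset.card_erase_of_mem (Finset.mem_univ _)]
        simp
      have hc1 : (Finset.univ.filter fun a : Fin (m + 1) =>
          ¬ (a : ℕ) + 1 = m + 1 ∧ a < τ a).card = excPerm τ := c1
      omega
    rw [c1, c2, if_pos h]
    ring
  · rw [if_neg h]
    have h2 : ∀ a : Fin (m + 1),
        (if InCS (insPerm τ (some a))
          then g (excPerm (insPerm τ (some a))) (cycPerm (insPerm τ (some a))) else 0)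
        = 0 := by
      intro a
      rw [if_neg (fun hc => h (InCS_ins_some_iff.1 hc).1)]
    rw [Finset.sum_congr rfl (fun a _ => h2 a), if_neg h]
    simp


lemma InCS_fin_one (π : Perm (Fin 1)) : InCS π := by
  intro k s hmin
  apply not_hasSuccession_short
  have hfix : π s = s := Subsingleton.elim _ _
  have hmp : minimalPeriod π s = 1 := by
    apply _root_.le_antisymm
    · exact Function.IsPeriodicPt.minimalPeriod_le one_pos
        (isPeriodicPt_pow π s (by rw [pow_one, hfix]))
    · exact minimalPeriod_pos π s
  calc ((cycleWord π s).filter (fun x => x ≤ k)).length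
      ≤ (cycleWord π s).length := List.length_filter_le _ _
    _ ≤ 1 := by rw [cycleWord_eq, hmp]; simp

lemma excPerm_fin_one (π : Perm (Fin 1)) : excPerm π = 0 := by
  rw [excPerm]
  convert Finset.card_empty
  apply Finset.filter_false_of_mem
  intro i _
  have : π i = i := Subsingleton.elim _ _
  rw [this]
  exact lt_irrefl i

lemma cycPerm_fin_one (π : Perm (Fin 1)) : cycPerm π = 1 := by
  have hπ : π = 1 := Subsingleton.elim _ _
  subst hπ
  rw [cycPerm, Equiv.Perm.cycleType_one]
  simp

lemma main_induction (n : ℕ) (g : ℕ → ℕ → ℝ) :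
    ∑ π : Perm (Fin n), g (excPerm π) (cycPerm π + 1)
      = ∑ σ ∈ Finset.univ.filter (fun σ : Perm (Fin (n + 1)) => InCS σ),
          g (excPerm σ) (cycPerm σ) := by
  induction n generalizing g with
  | zero =>
    have hL : ∑ π : Perm (Fin 0), g (excPerm π) (cycPerm π + 1) = g 0 1 := by
      rw [Fintype.sum_subsingleton _ (1 : Perm (Fin 0))]
      have he : excPerm (1 : Perm (Fin 0)) = 0 := by rw [excPerm]; simp
      have hc : cycPerm (1 : Perm (Fin 0)) = 0 := by
        rw [cycPerm, Equiv.Perm.cycleType_one]; simp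
      rw [he, hc]
    have hfilter : (Finset.univ.filter (fun σ : Perm (Fin 1) => InCS σ)) = Finset.univ := by
      apply Finset.filter_true_of_mem
      intro σ _
      exact InCS_fin_one σ
    rw [hL, hfilter, Fintype.sum_subsingleton _ (1 : Perm (Fin 1)), excPerm_fin_one,
      cycPerm_fin_one]
  | succ n ih =>
    have step1 : ∑ π : Perm (Fin (n + 1)), g (excPerm π) (cycPerm π + 1)
        = ∑ τ : Perm (Fin n),
            ((fun e c => g e (c + 1) + e • g e c + (n - e) • g (e + 1) c)
              (excPerm τ) (cycPerm τ + 1)) := by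
      have := sum_S (M := n) (fun e c => g e (c + 1))
      rw [this]
    rw [step1, ih (fun e c => g e (c + 1) + e • g e c + (n - e) • g (e + 1) c),
      sum_CS (m := n) g]


end CS

/-- for `n ≥ 1`,
`∑_{π ∈ S_n} x^{exc(π)} q^{cyc(π)+1} = ∑_{σ ∈ CS_{n+1}} x^{exc(σ)} q^{cyc(σ)}`. -/
theorem stmt8 (n : ℕ) (hn : 1 ≤ n) (x q : ℝ) :
    ∑ π : Equiv.Perm (Fin n), x ^ excPerm π * q ^ (cycPerm π + 1) =
    ∑ σ ∈ Finset.univ.filter (fun σ : Equiv.Perm (Fin (n + 1)) => InCS σ),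
      x ^ excPerm σ * q ^ cycPerm σ := by
  exact CS.main_induction n (fun e c => x ^ e * q ^ c)
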